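/- Under the hypotheses of the nonautonomous shadowing theorem (with $B=\ell^\infty$), there exists $\varepsilon>0$ such that if $(x_n)_{n\in\mathbb{Z}}$ and $(z_n)_{n\in\mathbb{Z}}$ are both full trajectories of $x_{n+1}=A_nx_n+f_n(x_n)$ and $\sup_{n\in\mathbb{Z}}\|x_n-z_n\|\le\varepsilon$, then $x_n=z_n$ for all $n$ (expansivity). -/

import Mathlib

/-- The sequence `A` of bounded operators admits an exponential dichotomy: there exist
an evolution family `E`, projections `P` commuting with the dynamics and constants
`C, lam > 0` with the usual exponential bounds. -/
def ExpDichotomy {X : Type*} [NormedAddCommGroup X] [NormedSpace ℝ X]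
    (A : ℤ → X →L[ℝ] X) : Prop :=
  ∃ (E : ℤ → ℤ → X →L[ℝ] X) (P : ℤ → X →L[ℝ] X) (C lam : ℝ),
    0 < C ∧ 0 < lam ∧
    (∀ n, E n n = ContinuousLinearMap.id ℝ X) ∧
    (∀ m n, E (m + 1) n = (A m).comp (E m n)) ∧
    (∀ m, (P m).comp (P m) = P m) ∧
    (∀ m, (P (m + 1)).comp (A m) = (A m).comp (P m)) ∧
    (∀ m n, n ≤ m → ‖(E m n).comp (P n)‖ ≤ C * Real.exp (-lam * ((m - n : ℤ) : ℝ))) ∧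
    (∀ m n, m ≤ n → ‖(E m n).comp (ContinuousLinearMap.id ℝ X - P n)‖ ≤
      C * Real.exp (-lam * ((n - m : ℤ) : ℝ)))

/-- If the norm of a vector is dominated by `C * exp (-lam * j)` for every natural `j`,
then the vector vanishes. -/
lemma norm_eq_zero_of_forall_le_exp {X : Type*} [NormedAddCommGroup X]
    {C lam : ℝ} (hC : 0 < C) (hlam : 0 < lam) {ξ : X}
    (h : ∀ j : ℕ, ‖ξ‖ ≤ C * Real.exp (-lam * j)) : ξ = 0 := by
  by_contra hξ
  have hpos : 0 < ‖ξ‖ := norm_pos_iff.mpr hξ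
  have hlt1 : Real.exp (-lam) < 1 := Real.exp_lt_one_iff.mpr (by linarith)
  obtain ⟨j, hj⟩ := exists_pow_lt_of_lt_one (div_pos hpos hC) hlt1
  have h2 := h j
  rw [show (-lam * (j : ℝ)) = (j : ℝ) * (-lam) by ring, Real.exp_nat_mul] at h2
  have h3 : C * Real.exp (-lam) ^ j < C * (‖ξ‖ / C) := mul_lt_mul_of_pos_left hj hC
  have h4 : C * (‖ξ‖ / C) = ‖ξ‖ := by field_simp
  linarith

/-- Robustness of the exponential dichotomy under all perturbations of size `c` forces
the lower bound `c * ‖v‖ < ‖A k v‖` for every `k` and every nonzero `v`: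
otherwise a rank-one perturbation kills `v` and fails to be surjective, whereas the
evolution-family recursion forces each operator of a dichotomic system to be surjective. -/
lemma conorm_gt {X : Type*} [NormedAddCommGroup X] [NormedSpace ℝ X]
    (A : ℤ → X ≃L[ℝ] X) (c : ℝ) (hc : 0 < c)
    (hrobust : ∀ B : ℤ → X →L[ℝ] X,
      (∀ m, ‖(A m : X →L[ℝ] X) - B m‖ ≤ c) → ExpDichotomy B)
    (k : ℤ) (v : X) (hv : v ≠ 0) : c * ‖v‖ < ‖(A k : X →L[ℝ] X) v‖ := by
  classical
  by_contra hle
  push_neg at hle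
  obtain ⟨ψ, hψ1, hψv⟩ := exists_dual_vector ℝ v (norm_ne_zero_iff.mpr hv)
  have hψv' : ψ v = ‖v‖ := by exact_mod_cast hψv
  set L : X →L[ℝ] X := ψ.smulRight (‖v‖⁻¹ • ((A k : X →L[ℝ] X) v)) with hL
  set B : ℤ → X →L[ℝ] X :=
    fun j => if j = k then (A k : X →L[ℝ] X) - L else (A j : X →L[ℝ] X) with hBdef
  have hvnorm : ‖v‖ ≠ 0 := norm_ne_zero_iff.mpr hv
  have hLnorm : ‖L‖ ≤ c := by
    rw [hL, ContinuousLinearMap.norm_smulRight_apply, hψ1, one_mul, norm_smul,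
      norm_inv, norm_norm]
    calc ‖v‖⁻¹ * ‖(A k : X →L[ℝ] X) v‖ ≤ ‖v‖⁻¹ * (c * ‖v‖) :=
          mul_le_mul_of_nonneg_left hle (by positivity)
      _ = c := by field_simp
  have hBc : ∀ m, ‖(A m : X →L[ℝ] X) - B m‖ ≤ c := by
    intro m
    by_cases hm : m = k
    · subst hm
      simpa [hBdef] using hLnorm
    · simp [hBdef, hm, hc.le]
  obtain ⟨E, P, C, lam, hC, hlam, hE1, hE2, -, -, -, -⟩ := hrobust B hBc
  have hBk : B k = (A k : X →L[ℝ] X) - L := by simp [hBdef]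
  have hsurj : (B k) ((E k (k + 1)) ((A k : X →L[ℝ] X) v)) = (A k : X →L[ℝ] X) v := by
    have h1 := (hE2 k (k + 1)).symm.trans (hE1 (k + 1))
    have := congrArg (fun T : X →L[ℝ] X => T ((A k : X →L[ℝ] X) v)) h1
    simpa using this
  set u := (E k (k + 1)) ((A k : X →L[ℝ] X) v) with hu
  rw [hBk] at hsurj
  have h3 : (A k : X →L[ℝ] X) (u - (ψ u * ‖v‖⁻¹) • v) = (A k : X →L[ℝ] X) v := by
    rw [map_sub, map_smul]
    simpa [hL, ContinuousLinearMap.smulRight_apply, smul_smul, mul_comm, mul_assoc]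
      using hsurj
  have h4 : u - (ψ u * ‖v‖⁻¹) • v = v := by
    apply (A k).injective
    simpa using h3
  have h5 := congrArg ψ h4
  rw [map_sub, map_smul, hψv'] at h5
  have h6 : ψ u * ‖v‖⁻¹ * ‖v‖ = ψ u := by field_simp
  apply hvnorm
  simp only [smul_eq_mul] at h5
  linarith [h5, h6]

/-- Expansivity: two full trajectories of the perturbed system that stay uniformly
`ε`-close must coincide. -/
theorem nonautonomous_expansivity {X : Type*} [NormedAddCommGroup X]
    [NormedSpace ℝ X] [CompleteSpace X]
    (A : ℤ → X ≃L[ℝ] X) (M : ℝ) (hM : ∀ m, ‖(A m : X →L[ℝ] X)‖ ≤ M)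
    (hED : ExpDichotomy fun m => (A m : X →L[ℝ] X))
    (c : ℝ) (hc : 0 < c)
    (hrobust : ∀ B : ℤ → X →L[ℝ] X,
      (∀ m, ‖(A m : X →L[ℝ] X) - B m‖ ≤ c) → ExpDichotomy B)
    (f : ℤ → X → X) (f' : ℤ → X → X →L[ℝ] X)
    (hdf : ∀ n x, HasFDerivAt (f n) (f' n x) x)
    (hfc : ∀ n x, ‖f' n x‖ ≤ c)
    (Mf : ℝ) (hMf : ∀ n x, ‖f n x‖ ≤ Mf)
    (D r : ℝ) (hD : 0 < D) (hr : 0 < r)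
    (hHolder : ∀ n x y, ‖f' n x - f' n y‖ ≤ D * ‖x - y‖ ^ r) :
    ∃ ε > (0 : ℝ), ∀ x z : ℤ → X,
      (∀ n, x (n + 1) = A n (x n) + f n (x n)) →
      (∀ n, z (n + 1) = A n (z n) + f n (z n)) →
      (∀ n, ‖x n - z n‖ ≤ ε) → x = z := by
  classical
  refine ⟨1, one_pos, ?_⟩
  intro x z hx hz hclose
  set w : ℤ → X := fun n => x n - z n with hwdef
  have hwb : ∀ n, ‖w n‖ ≤ 1 := fun n => hclose n
  -- mean value inequality
  have hlip : ∀ n : ℤ, ‖f n (x n) - f n (z n)‖ ≤ c * ‖w n‖ := by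
    intro n
    have := Convex.norm_image_sub_le_of_norm_hasFDerivWithin_le
      (f := f n) (f' := f' n) (s := Set.univ) (C := c)
      (fun y _ => (hdf n y).hasFDerivWithinAt)
      (fun y _ => hfc n y) convex_univ (Set.mem_univ (z n)) (Set.mem_univ (x n))
    simpa using this
  -- the rank-one perturbation of A along the difference w
  set B : ℤ → X →L[ℝ] X := fun n =>
    if h : w n = 0 then (A n : X →L[ℝ] X)
    else (A n : X →L[ℝ] X) +
      (Classical.choose (exists_dual_vector ℝ (w n) (norm_ne_zero_iff.mpr h))).smulRight
        (‖w n‖⁻¹ • (f n (x n) - f n (z n))) with hBdef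
  have hBnorm : ∀ n, ‖(A n : X →L[ℝ] X) - B n‖ ≤ c := by
    intro n
    by_cases h : w n = 0
    · simp [hBdef, h, hc.le]
    · obtain ⟨hφ1, hφ2⟩ := Classical.choose_spec (exists_dual_vector ℝ (w n) (norm_ne_zero_iff.mpr h))
      have hwn : ‖w n‖ ≠ 0 := norm_ne_zero_iff.mpr h
      have hBn : B n = (A n : X →L[ℝ] X) +
          (Classical.choose (exists_dual_vector ℝ (w n) (norm_ne_zero_iff.mpr h))).smulRight
            (‖w n‖⁻¹ • (f n (x n) - f n (z n))) := by
        simp [hBdef, h]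
      rw [hBn, sub_add_cancel_left, norm_neg,
        ContinuousLinearMap.norm_smulRight_apply, hφ1, one_mul, norm_smul,
        norm_inv, norm_norm]
      calc ‖w n‖⁻¹ * ‖f n (x n) - f n (z n)‖ ≤ ‖w n‖⁻¹ * (c * ‖w n‖) :=
            mul_le_mul_of_nonneg_left (hlip n) (by positivity)
        _ = c := by field_simp
  -- w is a trajectory of B
  have hwrec : ∀ n, w (n + 1) = (A n : X →L[ℝ] X) (w n) + (f n (x n) - f n (z n)) := by
    intro n
    show x (n + 1) - z (n + 1) = _
    rw [hx n, hz n]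
    have : (A n : X →L[ℝ] X) (x n - z n) = A n (x n) - A n (z n) := by
      simp [map_sub]
    rw [show w n = x n - z n from rfl, this]
    abel
  have hB2 : ∀ n, B n (w n) = w (n + 1) := by
    intro n
    by_cases h : w n = 0
    · have hxz : x n = z n := sub_eq_zero.mp h
      have : w (n + 1) = 0 := by
        rw [hwrec n, h, map_zero, hxz, sub_self, add_zero]
      rw [this]
      have hBn : B n = (A n : X →L[ℝ] X) := by simp [hBdef, h]
      rw [hBn, h, map_zero]
    · obtain ⟨hφ1, hφ2⟩ := Classical.choose_spec (exists_dual_vector ℝ (w n) (norm_ne_zero_iff.mpr h))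
      have hφ2' : (Classical.choose (exists_dual_vector ℝ (w n) (norm_ne_zero_iff.mpr h))) (w n) = ‖w n‖ := by
        exact_mod_cast hφ2
      have hwn : ‖w n‖ ≠ 0 := norm_ne_zero_iff.mpr h
      have hBn : B n = (A n : X →L[ℝ] X) +
          (Classical.choose (exists_dual_vector ℝ (w n) (norm_ne_zero_iff.mpr h))).smulRight
            (‖w n‖⁻¹ • (f n (x n) - f n (z n))) := by
        simp [hBdef, h]
      rw [hBn, hwrec n]
      simp only [ContinuousLinearMap.add_apply, ContinuousLinearMap.smulRight_apply, hφ2',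
        smul_smul]
      rw [mul_inv_cancel₀ hwn, one_smul]
  -- each B n is injective
  have hBinj : ∀ n, Function.Injective (B n) := by
    intro n a b hab
    by_contra hne
    have hv : a - b ≠ 0 := sub_ne_zero.mpr hne
    have h1 : (B n) (a - b) = 0 := by rw [map_sub, hab, sub_self]
    have h2 := conorm_gt A c hc hrobust n (a - b) hv
    have h3 : ‖(A n : X →L[ℝ] X) (a - b) - (B n) (a - b)‖ ≤ c * ‖a - b‖ := by
      calc ‖(A n : X →L[ℝ] X) (a - b) - (B n) (a - b)‖
          = ‖((A n : X →L[ℝ] X) - B n) (a - b)‖ := by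
            rw [ContinuousLinearMap.sub_apply]
        _ ≤ ‖(A n : X →L[ℝ] X) - B n‖ * ‖a - b‖ := ContinuousLinearMap.le_opNorm _ _
        _ ≤ c * ‖a - b‖ := mul_le_mul_of_nonneg_right (hBnorm n) (norm_nonneg _)
    rw [h1, sub_zero] at h3
    linarith
  -- the dichotomy for B
  obtain ⟨E, P, C, lam, hC, hlam, hE1, hE2, hPP, hPcomm, hstab, hunst⟩ := hrobust B hBnorm
  -- backward evolution of w
  have F2 : ∀ m n : ℤ, n ≤ m → (E n m) (w m) = w n := by
    intro m
    refine Int.le_induction_down ?_ ?_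
    · rw [hE1 m]; rfl
    · intro n hn ih
      have hrec := hE2 (n - 1) m
      rw [sub_add_cancel] at hrec
      apply hBinj (n - 1)
      calc (B (n - 1)) ((E (n - 1) m) (w m))
          = ((B (n - 1)).comp (E (n - 1) m)) (w m) := rfl
        _ = (E n m) (w m) := by rw [← hrec]
        _ = w n := ih
        _ = w (n - 1 + 1) := by rw [sub_add_cancel]
        _ = (B (n - 1)) (w (n - 1)) := (hB2 (n - 1)).symm
  -- forward evolution of the stable component
  have F3 : ∀ n m : ℤ, n ≤ m → (P m) (w m) = (E m n) ((P n) (w n)) := by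
    intro n
    refine Int.le_induction ?_ ?_
    · rw [hE1 n]; rfl
    · intro m hm ih
      have hrec := hE2 m n
      calc (P (m + 1)) (w (m + 1)) = (P (m + 1)) ((B m) (w m)) := by rw [← hB2 m]
        _ = ((P (m + 1)).comp (B m)) (w m) := rfl
        _ = ((B m).comp (P m)) (w m) := by rw [hPcomm m]
        _ = (B m) ((P m) (w m)) := rfl
        _ = (B m) ((E m n) ((P n) (w n))) := by rw [ih]
        _ = ((B m).comp (E m n)) ((P n) (w n)) := rfl
        _ = (E (m + 1) n) ((P n) (w n)) := by rw [← hrec]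
  -- stable component of w vanishes
  have hPw0 : ∀ m, (P m) (w m) = 0 := by
    intro m
    apply norm_eq_zero_of_forall_le_exp hC hlam
    intro j
    have hn : m - (j : ℤ) ≤ m := by omega
    have h1 := F3 (m - (j : ℤ)) m hn
    have h2 := hstab m (m - (j : ℤ)) hn
    have hcast : ((m - (m - (j : ℤ)) : ℤ) : ℝ) = (j : ℝ) := by
      rw [sub_sub_cancel]; exact Int.cast_natCast j
    calc ‖(P m) (w m)‖
        = ‖((E m (m - (j : ℤ))).comp (P (m - (j : ℤ)))) (w (m - (j : ℤ)))‖ := by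
          rw [h1]; rfl
      _ ≤ ‖(E m (m - (j : ℤ))).comp (P (m - (j : ℤ)))‖ * ‖w (m - (j : ℤ))‖ :=
          ContinuousLinearMap.le_opNorm _ _
      _ ≤ (C * Real.exp (-lam * ((m - (m - (j : ℤ)) : ℤ) : ℝ))) * 1 :=
          mul_le_mul h2 (hwb _) (norm_nonneg _) (by positivity)
      _ = C * Real.exp (-lam * (j : ℝ)) := by rw [mul_one, hcast]
  -- conclusion: w vanishes
  have hw0 : ∀ k, w k = 0 := by
    intro k
    apply norm_eq_zero_of_forall_le_exp hC hlam
    intro j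
    have hk : k ≤ k + (j : ℤ) := by omega
    have h1 := F2 (k + (j : ℤ)) k hk
    have h2 := hunst k (k + (j : ℤ)) hk
    have h3 : ((ContinuousLinearMap.id ℝ X) - P (k + (j : ℤ))) (w (k + (j : ℤ)))
        = w (k + (j : ℤ)) := by
      simp [ContinuousLinearMap.sub_apply, hPw0 (k + (j : ℤ))]
    have hcast : ((k + (j : ℤ) - k : ℤ) : ℝ) = (j : ℝ) := by
      rw [add_sub_cancel_left]; exact Int.cast_natCast j
    calc ‖w k‖ = ‖(E k (k + (j : ℤ))) (w (k + (j : ℤ)))‖ := by rw [h1]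
      _ = ‖((E k (k + (j : ℤ))).comp
            ((ContinuousLinearMap.id ℝ X) - P (k + (j : ℤ)))) (w (k + (j : ℤ)))‖ := by
          rw [ContinuousLinearMap.comp_apply, h3]
      _ ≤ ‖(E k (k + (j : ℤ))).comp ((ContinuousLinearMap.id ℝ X) - P (k + (j : ℤ)))‖ *
            ‖w (k + (j : ℤ))‖ := ContinuousLinearMap.le_opNorm _ _
      _ ≤ (C * Real.exp (-lam * ((k + (j : ℤ) - k : ℤ) : ℝ))) * 1 :=
          mul_le_mul h2 (hwb _) (norm_nonneg _) (by positivity)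
      _ = C * Real.exp (-lam * (j : ℝ)) := by rw [mul_one, hcast]
  funext n
  exact sub_eq_zero.mp (hw0 n)
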